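/- arXiv:1605.02254 — 3 statements merged into one kernel-verified Lean document; each statement's English description precedes it below -/
import Mathlib

section
/- Let f(x) = Σ_{i=0}^d a_i x^i ∈ ℤ_q[x] and let e_n = e_n(π_1,...,π_ℓ) be the coefficients of Π_{j=1}^ℓ E_{c_j f}(x)_{π_j} = Σ_{n≥0} e_n x^n, where E is the Artin–Hasse exponential. Then for all n ≥ 1: n·e_n = Σ_{i=1}^d Σ_{r=0}^∞ i · e_{n - i p^r} · a_i^{p^r} · (Σ_{j=1}^ℓ (c_j π_j)^{p^r}), with the convention e_m = 0 for m < 0. -/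
open Finset

section Aux

variable {A : Type*} [CommRing A]

/-- The operator `F ↦ x F'` on power series, at the level of coefficients. -/
noncomputable def xDeriv (F : PowerSeries A) : PowerSeries A :=
  PowerSeries.mk fun n => n • PowerSeries.coeff n F

lemma coeff_xDeriv (F : PowerSeries A) (n : ℕ) :
    PowerSeries.coeff n (xDeriv F) = n • PowerSeries.coeff n F := by
  simp [xDeriv]

lemma xDeriv_one : xDeriv (1 : PowerSeries A) = 0 := by
  ext n
  rcases Nat.eq_zero_or_pos n with rfl | hn
  · simp [coeff_xDeriv]
  · simp [coeff_xDeriv, PowerSeries.coeff_one, hn.ne']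

lemma xDeriv_mul (F G : PowerSeries A) :
    xDeriv (F * G) = xDeriv F * G + F * xDeriv G := by
  ext n
  simp only [coeff_xDeriv, map_add, PowerSeries.coeff_mul, coeff_xDeriv, Finset.smul_sum]
  rw [← Finset.sum_add_distrib]
  refine Finset.sum_congr rfl fun x hx => ?_
  rw [Finset.HasAntidiagonal.mem_antidiagonal] at hx
  rw [← hx, add_smul, smul_mul_assoc, mul_smul_comm]

lemma xDeriv_prod {ι : Type*} [DecidableEq ι] (s : Finset ι)
    (G H : ι → PowerSeries A) :
    (∀ k ∈ s, xDeriv (G k) = G k * H k) →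
    xDeriv (∏ k ∈ s, G k) = (∏ k ∈ s, G k) * ∑ k ∈ s, H k := by
  induction s using Finset.induction_on with
  | empty => intro _; simp [xDeriv_one]
  | @insert a s ha ih =>
    intro h
    rw [Finset.prod_insert ha, Finset.sum_insert ha, xDeriv_mul,
      h a (Finset.mem_insert_self a s),
      ih (fun k hk => h k (Finset.mem_insert_of_mem hk))]
    ring

lemma sum_helper {p i : ℕ} (hp : 1 < p) (hi : 0 < i)
    (n : ℕ) (e T : ℕ → A) :
    (∑ k ∈ Finset.range (n + 1), e k * ∑ r ∈ Finset.range (n - k + 1),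
        (if n - k = i * p ^ r then T r else 0))
      = ∑ r ∈ Finset.range (n + 1),
        if i * p ^ r ≤ n then e (n - i * p ^ r) * T r else 0 := by
  have hext : ∀ k ∈ Finset.range (n + 1),
      e k * ∑ r ∈ Finset.range (n - k + 1), (if n - k = i * p ^ r then T r else 0)
        = ∑ r ∈ Finset.range (n + 1), (if n - k = i * p ^ r then e k * T r else 0) := by
    intro k hk
    rw [Finset.mul_sum]
    have hmov : ∀ r : ℕ, e k * (if n - k = i * p ^ r then T r else 0)
        = (if n - k = i * p ^ r then e k * T r else 0) := fun r => by
      rw [mul_ite, mul_zero]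
    simp only [hmov]
    refine Finset.sum_subset (Finset.range_subset_range.2 (by omega)) ?_
    intro r hr hr'
    simp only [Finset.mem_range] at hr hr'
    rw [if_neg]
    intro hcon
    have h1 : r < p ^ r := Nat.lt_pow_self (n := r) hp
    have h2 : p ^ r ≤ i * p ^ r := Nat.le_mul_of_pos_left _ hi
    omega
  rw [Finset.sum_congr rfl hext, Finset.sum_comm]
  refine Finset.sum_congr rfl fun r _ => ?_
  by_cases h : i * p ^ r ≤ n
  · rw [if_pos h,
      Finset.sum_eq_single_of_mem (n - i * p ^ r) (Finset.mem_range.2 (by omega))]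
    · rw [if_pos (by omega)]
    · intro k hk hne
      simp only [Finset.mem_range] at hk
      rw [if_neg (by omega)]
  · rw [if_neg h]
    refine Finset.sum_eq_zero fun k hk => ?_
    simp only [Finset.mem_range] at hk
    rw [if_neg (by omega)]

end Aux

/-- The series `∑_r i (c π_j)^{p^r} x^{i p^r}`, i.e. `x (log E_{c}(x^i))'`. -/
noncomputable def mvAhH {R : Type*} [CommRing R] (ℓ p : ℕ) (cc : R) (i : ℕ) (j : Fin ℓ) :
    PowerSeries (MvPowerSeries (Fin ℓ) R) :=
  PowerSeries.mk fun m => ∑ r ∈ Finset.range (m + 1),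
    if m = i * p ^ r then
      i • (MvPowerSeries.monomial (R := R) (Finsupp.single j (p ^ r))) (cc ^ p ^ r) else 0

lemma mvAhH_zero {R : Type*} [CommRing R] (ℓ p : ℕ) (cc : R) (j : Fin ℓ) :
    mvAhH ℓ p cc 0 j = 0 := by
  ext m
  simp [mvAhH]

lemma coeff_mul_mvAhH {R : Type*} [CommRing R] {ℓ p i : ℕ} (hp : 1 < p) (hi : 0 < i)
    (cc : R) (j : Fin ℓ) (G : PowerSeries (MvPowerSeries (Fin ℓ) R)) (n : ℕ) :
    PowerSeries.coeff (R := MvPowerSeries (Fin ℓ) R) n (G * mvAhH ℓ p cc i j)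
      = ∑ r ∈ Finset.range (n + 1),
        if i * p ^ r ≤ n then
          PowerSeries.coeff (R := MvPowerSeries (Fin ℓ) R) (n - i * p ^ r) G
            * (i • (MvPowerSeries.monomial (R := R) (Finsupp.single j (p ^ r))) (cc ^ p ^ r))
        else 0 := by
  rw [PowerSeries.coeff_mul, Finset.Nat.sum_antidiagonal_eq_sum_range_succ_mk]
  simp only [mvAhH, PowerSeries.coeff_mk]
  exact sum_helper hp hi n _ _
/-- The factor `E(c · π_j · x^i)` of `∏_j E_{c_j f}(x)_{π_j}`, as a power series in `x` over
`R[[π_1, …, π_ℓ]]`; `u : ℕ → R` is the coefficient sequence of the Artin–Hasse exponential. -/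
noncomputable def mvAhFactor {R : Type*} [CommRing R] (ℓ : ℕ) (u : ℕ → R) (c : R)
    (i : ℕ) (j : Fin ℓ) : PowerSeries (MvPowerSeries (Fin ℓ) R) :=
  PowerSeries.mk fun n =>
    if i = 0 then
      (if n = 0 then
        (fun s => if s = Finsupp.single j (s j) then u (s j) * c ^ (s j) else 0 :
          MvPowerSeries (Fin ℓ) R)
      else 0)
    else if i ∣ n then
      (MvPowerSeries.monomial (R := R) (Finsupp.single j (n / i))) (u (n / i) * c ^ (n / i))
    else 0


lemma mvAhFactor_xDeriv {R : Type*} [CommRing R] {p : ℕ} (ℓ : ℕ) (hp : 1 < p) (u : ℕ → R)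
    (hu : ∀ k : ℕ, 1 ≤ k →
      k • u k = ∑ r ∈ Finset.range (k + 1), if p ^ r ≤ k then u (k - p ^ r) else 0)
    (cc : R) (i : ℕ) (j : Fin ℓ) :
    xDeriv (mvAhFactor ℓ u cc i j) = mvAhFactor ℓ u cc i j * mvAhH ℓ p cc i j := by
  rcases Nat.eq_zero_or_pos i with rfl | hi
  · rw [mvAhH_zero, mul_zero]
    ext m
    rcases Nat.eq_zero_or_pos m with rfl | hm
    · simp [coeff_xDeriv]
    · simp [coeff_xDeriv, mvAhFactor, hm.ne']
  have hg : ∀ m : ℕ,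
      PowerSeries.coeff (R := MvPowerSeries (Fin ℓ) R) (i * m) (mvAhFactor ℓ u cc i j)
        = (MvPowerSeries.monomial (R := R) (Finsupp.single j m)) (u m * cc ^ m) := by
    intro m
    simp only [mvAhFactor, PowerSeries.coeff_mk, if_neg hi.ne', if_pos (dvd_mul_right i m),
      Nat.mul_div_cancel_left m hi]
  refine PowerSeries.ext fun n => ?_
  rw [coeff_xDeriv, coeff_mul_mvAhH hp hi]
  rcases Nat.eq_zero_or_pos n with rfl | hn
  · rw [zero_smul]
    symm
    refine Finset.sum_eq_zero fun r hr => ?_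
    rw [if_neg]
    have : 0 < i * p ^ r := Nat.mul_pos hi (pow_pos (by omega) r)
    omega
  by_cases hdvd : i ∣ n
  · obtain ⟨k0, rfl⟩ := hdvd
    have hk0 : 1 ≤ k0 := by
      rcases Nat.eq_zero_or_pos k0 with rfl | h
      · simp at hn
      · exact h
    have step : ∀ r ∈ Finset.range (i * k0 + 1),
        (if i * p ^ r ≤ i * k0 then
            PowerSeries.coeff (R := MvPowerSeries (Fin ℓ) R) (i * k0 - i * p ^ r)
                (mvAhFactor ℓ u cc i j)
              * (i • (MvPowerSeries.monomial (R := R) (Finsupp.single j (p ^ r))) (cc ^ p ^ r))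
          else 0)
        = i • (MvPowerSeries.monomial (R := R) (Finsupp.single j k0))
            ((if p ^ r ≤ k0 then u (k0 - p ^ r) else 0) * cc ^ k0) := by
      intro r _
      by_cases hpr : p ^ r ≤ k0
      · rw [if_pos (Nat.mul_le_mul_left i hpr), if_pos hpr]
        have hsub : i * k0 - i * p ^ r = i * (k0 - p ^ r) := by
          have h1 : i * k0 = i * (k0 - p ^ r) + i * p ^ r := by
            rw [← Nat.mul_add, Nat.sub_add_cancel hpr]
          omega
        have hks : k0 - p ^ r + p ^ r = k0 := Nat.sub_add_cancel hpr
        rw [hsub, hg (k0 - p ^ r), mul_smul_comm, MvPowerSeries.monomial_mul_monomial,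
          ← Finsupp.single_add, mul_assoc, ← pow_add, hks]
      · rw [if_neg, if_neg hpr]
        · rw [zero_mul, map_zero, smul_zero]
        · intro hcon
          exact hpr (Nat.le_of_mul_le_mul_left hcon hi)
    rw [Finset.sum_congr rfl step, ← Finset.smul_sum, ← map_sum, ← Finset.sum_mul]
    rw [hg k0, mul_smul, ← map_nsmul, ← smul_mul_assoc, hu k0 hk0]
    have hrange : (∑ r ∈ Finset.range (k0 + 1), if p ^ r ≤ k0 then u (k0 - p ^ r) else 0)
        = ∑ r ∈ Finset.range (i * k0 + 1), if p ^ r ≤ k0 then u (k0 - p ^ r) else 0 := by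
      refine Finset.sum_subset (Finset.range_subset_range.2 ?_) ?_
      · have : k0 ≤ i * k0 := Nat.le_mul_of_pos_left k0 hi
        omega
      · intro r hr hr'
        simp only [Finset.mem_range] at hr hr'
        rw [if_neg]
        have h1 : r < p ^ r := Nat.lt_pow_self (n := r) hp
        omega
    rw [hrange]
  · have hg0 : PowerSeries.coeff (R := MvPowerSeries (Fin ℓ) R) n (mvAhFactor ℓ u cc i j) = 0 := by
      simp only [mvAhFactor, PowerSeries.coeff_mk, if_neg hi.ne', if_neg hdvd]
    rw [hg0, smul_zero]
    symm
    refine Finset.sum_eq_zero fun r hr => ?_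
    by_cases h : i * p ^ r ≤ n
    · rw [if_pos h]
      have hz : PowerSeries.coeff (R := MvPowerSeries (Fin ℓ) R) (n - i * p ^ r)
          (mvAhFactor ℓ u cc i j) = 0 := by
        simp only [mvAhFactor, PowerSeries.coeff_mk, if_neg hi.ne']
        rw [if_neg]
        intro hc
        refine hdvd ?_
        have h2 := Nat.dvd_add hc (dvd_mul_right i (p ^ r))
        rwa [Nat.sub_add_cancel h] at h2
      rw [hz, zero_mul]
    · rw [if_neg h]
/-- The coefficient `e_n` of `x^n` in `∏_{j=1}^ℓ E_{c_j f}(x)_{π_j}`, extended to integer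
indices by the convention `e_m = 0` for `m < 0`. -/
noncomputable def mvAhCoeff {R : Type*} [CommRing R] (ℓ d : ℕ) (u : ℕ → R) (a : ℕ → R)
    (c : Fin ℓ → R) (n : ℤ) : MvPowerSeries (Fin ℓ) R :=
  if n < 0 then 0
  else PowerSeries.coeff (R := MvPowerSeries (Fin ℓ) R) n.toNat
    (∏ j : Fin ℓ, ∏ i ∈ Finset.range (d + 1), mvAhFactor ℓ u (c j * a i) i j)

/-- Lemma 5.2 of Ren–Wan–Xiao–Yu (the identity): with `f = ∑_{i=0}^d a_i x^i` and
`e_n` the coefficients of `∏_j E_{c_j f}(x)_{π_j}`, for all `n ≥ 1`: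
`n e_n = ∑_{i=1}^d ∑_{r≥0} i · e_{n - i p^r} · a_i^{p^r} · (∑_j (c_j π_j)^{p^r})`,
with `e_m = 0` for `m < 0`.  (The sum over `r` is truncated at `r = n`; all further terms
vanish since `p^r > n` forces a negative index.) -/
theorem mvAhCoeff_recurrence (p d ℓ : ℕ) [Fact p.Prime] (hd : 0 < d) (hpd : ¬ p ∣ d)
    (hℓ : 0 < ℓ) {R : Type*} [CommRing R] (a : ℕ → R) (had : IsUnit (a d)) (c : Fin ℓ → R)
    (u : ℕ → R) (hu0 : u 0 = 1)
    (hu : ∀ k : ℕ, 1 ≤ k →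
      k • u k = ∑ r ∈ Finset.range (k + 1), if p ^ r ≤ k then u (k - p ^ r) else 0)
    (n : ℕ) (hn : 1 ≤ n) :
    n • mvAhCoeff ℓ d u a c (n : ℤ)
      = ∑ i ∈ Finset.Icc 1 d, ∑ r ∈ Finset.range (n + 1),
          i • mvAhCoeff ℓ d u a c ((n : ℤ) - (i : ℤ) * (p : ℤ) ^ r)
            * MvPowerSeries.C (σ := Fin ℓ) (R := R) (a i ^ p ^ r)
            * (∑ j : Fin ℓ,
                (MvPowerSeries.C (σ := Fin ℓ) (R := R) (c j) * MvPowerSeries.X j) ^ p ^ r) := by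
  classical
  have hp : 1 < p := (Fact.out : p.Prime).one_lt
  set F : PowerSeries (MvPowerSeries (Fin ℓ) R) :=
    ∏ j : Fin ℓ, ∏ i ∈ Finset.range (d + 1), mvAhFactor ℓ u (c j * a i) i j with hF
  have he : ∀ m : ℕ, mvAhCoeff ℓ d u a c (m : ℤ)
      = PowerSeries.coeff (R := MvPowerSeries (Fin ℓ) R) m F := by
    intro m
    rw [mvAhCoeff, if_neg (not_lt.2 (Int.natCast_nonneg m)), Int.toNat_natCast, hF]
  have hB : xDeriv F
      = F * ∑ j : Fin ℓ, ∑ i ∈ Finset.range (d + 1), mvAhH ℓ p (c j * a i) i j := by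
    rw [hF]
    refine xDeriv_prod _ _ _ fun j _ => ?_
    exact xDeriv_prod _ _ _ fun i _ => mvAhFactor_xDeriv ℓ hp u hu (c j * a i) i j
  have key := congrArg (PowerSeries.coeff (R := MvPowerSeries (Fin ℓ) R) n) hB
  rw [coeff_xDeriv] at key
  rw [he n, key]
  simp only [Finset.mul_sum, map_sum]
  have hres : (∑ j : Fin ℓ, ∑ i ∈ Finset.range (d + 1),
        PowerSeries.coeff (R := MvPowerSeries (Fin ℓ) R) n (F * mvAhH ℓ p (c j * a i) i j))
      = ∑ j : Fin ℓ, ∑ i ∈ Finset.Icc 1 d,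
        PowerSeries.coeff (R := MvPowerSeries (Fin ℓ) R) n (F * mvAhH ℓ p (c j * a i) i j) := by
    refine Finset.sum_congr rfl fun j _ => ?_
    symm
    refine Finset.sum_subset ?_ ?_
    · intro i hi; simp only [Finset.mem_Icc, Finset.mem_range] at *; omega
    · intro i hi hi'
      have h0 : i = 0 := by simp only [Finset.mem_Icc, Finset.mem_range] at *; omega
      subst h0
      rw [mvAhH_zero, mul_zero, map_zero]
  rw [hres, Finset.sum_comm]
  refine Finset.sum_congr rfl fun i hi => ?_
  have hi1 : 0 < i := by simp only [Finset.mem_Icc] at hi; omega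
  rw [Finset.sum_congr rfl (fun j _ => coeff_mul_mvAhH hp hi1 (c j * a i) j F n),
    Finset.sum_comm]
  refine Finset.sum_congr rfl fun r _ => ?_
  symm
  by_cases h : i * p ^ r ≤ n
  · have hcast : (n : ℤ) - (i : ℤ) * (p : ℤ) ^ r = ((n - i * p ^ r : ℕ) : ℤ) := by
      rw [Nat.cast_sub h]; push_cast; ring
    rw [hcast, he]
    refine Finset.sum_congr rfl fun j _ => ?_
    rw [if_pos h]
    have hCX : (MvPowerSeries.C (σ := Fin ℓ) (R := R) (c j) * MvPowerSeries.X j) ^ p ^ r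
        = (MvPowerSeries.monomial (R := R) (Finsupp.single j (p ^ r))) ((c j) ^ p ^ r) := by
      rw [mul_pow, MvPowerSeries.X_pow_eq, ← map_pow, ← MvPowerSeries.monomial_zero_eq_C_apply,
        MvPowerSeries.monomial_mul_monomial, zero_add, mul_one]
    have hCM : MvPowerSeries.C (σ := Fin ℓ) (R := R) (a i ^ p ^ r)
          * (MvPowerSeries.monomial (R := R) (Finsupp.single j (p ^ r))) ((c j) ^ p ^ r)
        = (MvPowerSeries.monomial (R := R) (Finsupp.single j (p ^ r))) ((c j * a i) ^ p ^ r) := by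
      rw [← MvPowerSeries.monomial_zero_eq_C_apply, MvPowerSeries.monomial_mul_monomial,
        zero_add, mul_pow]
      congr 1
      ring
    rw [hCX]
    simp only [nsmul_eq_mul]
    rw [mul_assoc, hCM]
    ring
  · have hneg : (n : ℤ) - (i : ℤ) * (p : ℤ) ^ r < 0 := by
      have h2 : (n : ℤ) < ((i * p ^ r : ℕ) : ℤ) := by exact_mod_cast not_le.1 h
      push_cast at h2
      omega
    have hz : mvAhCoeff ℓ d u a c ((n : ℤ) - (i : ℤ) * (p : ℤ) ^ r) = 0 := by
      rw [mvAhCoeff, if_pos hneg]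
    rw [hz]
    simp only [smul_zero, zero_mul, Finset.sum_const_zero]
    exact (Finset.sum_eq_zero fun j _ => if_neg h).symm
end

section
/- With notation as in the previous statement, modulo p one has the congruence n·e_n ≡ Σ_{i=1}^d Σ_{r=0}^∞ i · e_{n-ip^r} · a_i^{p^r} · (Σ_{j=1}^ℓ c_j π_j)^{p^r} (mod p), i.e., in F_q[[π_1,...,π_ℓ]] the recurrence involves only powers of the single element T̄ = Σ_j c̄_j π_j. -/
section XD

variable {A : Type*} [CommRing A]

/-- The operator `x · d/dx` on power series. -/
noncomputable def xD (f : PowerSeries A) : PowerSeries A :=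
  PowerSeries.mk fun m => m • PowerSeries.coeff (R := A) m f

lemma coeff_xD (m : ℕ) (f : PowerSeries A) :
    PowerSeries.coeff (R := A) m (xD f) = m • PowerSeries.coeff (R := A) m f :=
  PowerSeries.coeff_mk _ _

lemma xD_one : xD (1 : PowerSeries A) = 0 := by
  ext m
  rw [coeff_xD, PowerSeries.coeff_one, map_zero]
  cases m <;> simp

lemma xD_mul (f g : PowerSeries A) : xD (f * g) = xD f * g + f * xD g := by
  ext m
  rw [map_add, coeff_xD, PowerSeries.coeff_mul, PowerSeries.coeff_mul, PowerSeries.coeff_mul,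
    Finset.smul_sum, ← Finset.sum_add_distrib]
  refine Finset.sum_congr rfl fun q hq => ?_
  rw [Finset.HasAntidiagonal.mem_antidiagonal] at hq
  rw [coeff_xD, coeff_xD, ← hq, add_smul, smul_mul_assoc, mul_smul_comm]

lemma xD_prod {ι : Type*} (s : Finset ι) (f g : ι → PowerSeries A)
    (h : ∀ k ∈ s, xD (f k) = g k * f k) :
    xD (∏ k ∈ s, f k) = (∑ k ∈ s, g k) * ∏ k ∈ s, f k := by
  classical
  induction s using Finset.induction_on with
  | empty => simp [xD_one]
  | @insert b t hne ih =>
    rw [Finset.prod_insert hne, Finset.sum_insert hne, xD_mul,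
      h b (Finset.mem_insert_self _ _), ih fun k hk => h k (Finset.mem_insert_of_mem hk)]
    ring

end XD

section AuxG

variable {A : Type*} [CommRing A]

/-- The auxiliary series `i • ∑_{r ≥ 0} y^(p^r) x^(i·p^r)`. -/
noncomputable def auxG (p i : ℕ) (y : A) : PowerSeries A :=
  PowerSeries.mk fun m => ∑ r ∈ Finset.range (m + 1),
    if m = i * p ^ r then (i : A) * y ^ (p ^ r) else 0

lemma coeff_auxG_mul {p : ℕ} (hp : p.Prime) (i : ℕ) (y : A) (F : PowerSeries A) (n : ℕ) :
    PowerSeries.coeff (R := A) n (auxG p i y * F) =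
      ∑ r ∈ Finset.range (n + 1),
        if i * p ^ r ≤ n then
          (i : A) * y ^ (p ^ r) * PowerSeries.coeff (R := A) (n - i * p ^ r) F
        else 0 := by
  rw [PowerSeries.coeff_mul, Finset.Nat.sum_antidiagonal_eq_sum_range_succ_mk]
  have hext : ∀ a ∈ Finset.range (n + 1),
      PowerSeries.coeff (R := A) a (auxG p i y) =
        ∑ r ∈ Finset.range (n + 1), if a = i * p ^ r then (i : A) * y ^ (p ^ r) else 0 := by
    intro a ha
    rw [Finset.mem_range] at ha
    rw [auxG, PowerSeries.coeff_mk]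
    refine Finset.sum_subset (Finset.range_subset_range.mpr (by omega)) ?_
    intro r _ hr
    rw [Finset.mem_range] at hr
    split_ifs with h
    · rcases Nat.eq_zero_or_pos i with hi | hi
      · simp [hi]
      · exfalso
        have h1 : r < p ^ r := Nat.lt_pow_self (n := r) hp.one_lt
        have h2 : p ^ r ≤ i * p ^ r := Nat.le_mul_of_pos_left _ hi
        omega
    · rfl
  calc ∑ a ∈ Finset.range (n + 1),
        PowerSeries.coeff (R := A) a (auxG p i y) * PowerSeries.coeff (R := A) (n - a) F
      = ∑ a ∈ Finset.range (n + 1), ∑ r ∈ Finset.range (n + 1),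
          (if a = i * p ^ r then (i : A) * y ^ (p ^ r) else 0) *
            PowerSeries.coeff (R := A) (n - a) F := by
        refine Finset.sum_congr rfl fun a ha => ?_
        rw [hext a ha, Finset.sum_mul]
    _ = ∑ r ∈ Finset.range (n + 1), ∑ a ∈ Finset.range (n + 1),
          if a = i * p ^ r then
            (i : A) * y ^ (p ^ r) * PowerSeries.coeff (R := A) (n - a) F else 0 := by
        rw [Finset.sum_comm]
        exact Finset.sum_congr rfl fun r _ => Finset.sum_congr rfl fun a _ => by
          rw [ite_mul, zero_mul]
    _ = _ := by
        refine Finset.sum_congr rfl fun r _ => ?_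
        rw [Finset.sum_ite_eq' (Finset.range (n + 1)) (i * p ^ r)
          (fun a => (i : A) * y ^ (p ^ r) * PowerSeries.coeff (R := A) (n - a) F)]
        simp only [Finset.mem_range, Nat.lt_succ_iff]

end AuxG

section Factor

variable {R : Type*} [CommRing R] {ℓ : ℕ}

lemma coeff_mvAhFactor (u : ℕ → R) (c : R) {i : ℕ} (hi : i ≠ 0) (j : Fin ℓ) (m : ℕ) :
    PowerSeries.coeff (R := MvPowerSeries (Fin ℓ) R) m (mvAhFactor ℓ u c i j) =
      if i ∣ m then
        MvPowerSeries.C (σ := Fin ℓ) (R := R) (u (m / i)) *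
          (MvPowerSeries.C (σ := Fin ℓ) (R := R) c * MvPowerSeries.X j) ^ (m / i)
      else 0 := by
  rw [mvAhFactor, PowerSeries.coeff_mk, if_neg hi]
  split_ifs with h
  · rw [mul_pow, ← map_pow, ← mul_assoc, ← map_mul, MvPowerSeries.X_pow_eq,
      ← MvPowerSeries.monomial_zero_eq_C_apply, MvPowerSeries.monomial_mul_monomial,
      zero_add, mul_one]
  · rfl

lemma xD_mvAhFactor {p : ℕ} (hp : p.Prime) (u : ℕ → R)
    (hu : ∀ k : ℕ, 1 ≤ k →
      k • u k = ∑ r ∈ Finset.range (k + 1), if p ^ r ≤ k then u (k - p ^ r) else 0)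
    (c : R) (i : ℕ) (j : Fin ℓ) :
    xD (mvAhFactor ℓ u c i j) =
      auxG p i (MvPowerSeries.C (σ := Fin ℓ) (R := R) c * MvPowerSeries.X j) * mvAhFactor ℓ u c i j := by
  have husum : ∀ k m : ℕ, k ≤ m →
      (∑ r ∈ Finset.range (m + 1), if p ^ r ≤ k then u (k - p ^ r) else 0) = k • u k := by
    intro k m hkm
    rcases Nat.eq_zero_or_pos k with rfl | hk
    · have hz : ∀ r : ℕ, ¬ p ^ r ≤ 0 := fun r => by
        simpa [Nat.le_zero] using pow_ne_zero r hp.pos.ne'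
      simp [hz]
    · refine (Finset.sum_subset (Finset.range_subset_range.mpr (by omega)) ?_).symm.trans
        (hu k hk).symm
      intro r _ hr
      rw [Finset.mem_range] at hr
      have h1 : r < p ^ r := Nat.lt_pow_self (n := r) hp.one_lt
      exact if_neg (by omega)
  rcases Nat.eq_zero_or_pos i with rfl | hi
  · have hG : auxG p 0 (MvPowerSeries.C (σ := Fin ℓ) (R := R) c * MvPowerSeries.X j) = 0 := by
      ext m
      rw [auxG, PowerSeries.coeff_mk, map_zero]
      simp
    rw [hG, zero_mul]
    ext m : 1
    rw [coeff_xD, map_zero, mvAhFactor, PowerSeries.coeff_mk, if_pos rfl]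
    cases m
    · simp
      exact zero_smul ℕ _
    · simp
  have hi' : i ≠ 0 := hi.ne'
  set Y := MvPowerSeries.C (σ := Fin ℓ) (R := R) c * MvPowerSeries.X j with hY
  refine PowerSeries.ext fun m => ?_
  rw [coeff_xD, coeff_auxG_mul hp, coeff_mvAhFactor u c hi' j m]
  have hstep : ∀ r ∈ Finset.range (m + 1),
      (if i * p ^ r ≤ m then
        (i : MvPowerSeries (Fin ℓ) R) * Y ^ (p ^ r) *
          PowerSeries.coeff (R := MvPowerSeries (Fin ℓ) R) (m - i * p ^ r) (mvAhFactor ℓ u c i j)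
      else 0) =
      (if i * p ^ r ≤ m then
        (i : MvPowerSeries (Fin ℓ) R) * Y ^ (p ^ r) *
          (if i ∣ m - i * p ^ r then
            MvPowerSeries.C (σ := Fin ℓ) (R := R) (u ((m - i * p ^ r) / i)) * Y ^ ((m - i * p ^ r) / i)
          else 0)
      else 0) := by
    intro r _
    rw [coeff_mvAhFactor u c hi' j]
  rw [Finset.sum_congr rfl hstep]
  by_cases hdvd : i ∣ m
  · obtain ⟨k, rfl⟩ := hdvd
    have hkd : i * k / i = k := Nat.mul_div_cancel_left k hi
    rw [if_pos ⟨k, rfl⟩, hkd]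
    have hterm : ∀ r ∈ Finset.range (i * k + 1),
        (if i * p ^ r ≤ i * k then
          (i : MvPowerSeries (Fin ℓ) R) * Y ^ (p ^ r) *
            (if i ∣ i * k - i * p ^ r then
              MvPowerSeries.C (σ := Fin ℓ) (R := R) (u ((i * k - i * p ^ r) / i)) *
                Y ^ ((i * k - i * p ^ r) / i)
            else 0)
        else 0) =
        (if p ^ r ≤ k then MvPowerSeries.C (σ := Fin ℓ) (R := R) (u (k - p ^ r)) else 0) *
          ((i : MvPowerSeries (Fin ℓ) R) * Y ^ k) := by
      intro r _
      have hcond : i * p ^ r ≤ i * k ↔ p ^ r ≤ k :=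
        ⟨fun h => Nat.le_of_mul_le_mul_left h hi, fun h => Nat.mul_le_mul_left i h⟩
      by_cases h : p ^ r ≤ k
      · rw [if_pos (hcond.mpr h), if_pos, ← Nat.mul_sub, Nat.mul_div_cancel_left _ hi, if_pos h]
        · rw [← mul_assoc, mul_comm ((i : MvPowerSeries (Fin ℓ) R) * Y ^ p ^ r)
            (MvPowerSeries.C (σ := Fin ℓ) (R := R) (u (k - p ^ r))), mul_assoc, mul_assoc,
            ← pow_add, Nat.add_sub_cancel' h]
        · exact ⟨k - p ^ r, by rw [← Nat.mul_sub]⟩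
      · rw [if_neg (fun hc => h (hcond.mp hc)), if_neg h, zero_mul]
    have hite : ∀ r ∈ Finset.range (i * k + 1),
        (if p ^ r ≤ k then MvPowerSeries.C (σ := Fin ℓ) (R := R) (u (k - p ^ r)) else 0) =
          MvPowerSeries.C (σ := Fin ℓ) (R := R) (if p ^ r ≤ k then u (k - p ^ r) else 0) := by
      intro r _
      split <;> simp
    rw [Finset.sum_congr rfl hterm, ← Finset.sum_mul, Finset.sum_congr rfl hite, ← map_sum,
      husum k (i * k) (Nat.le_mul_of_pos_left k hi)]
    have hCk : MvPowerSeries.C (σ := Fin ℓ) (R := R) (k • u k)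
        = (k : MvPowerSeries (Fin ℓ) R) * MvPowerSeries.C (σ := Fin ℓ) (R := R) (u k) := by
      rw [nsmul_eq_mul, map_mul, map_natCast]
    rw [hCk, nsmul_eq_mul, Nat.cast_mul]
    ring
  · rw [if_neg hdvd, smul_zero]
    symm
    apply Finset.sum_eq_zero
    intro r hr
    by_cases h : i * p ^ r ≤ m
    · rw [if_pos h, if_neg, mul_zero]
      intro hc
      exact hdvd (by
        have : m = (m - i * p ^ r) + i * p ^ r := by omega
        rw [this]
        exact Nat.dvd_add hc ⟨p ^ r, rfl⟩)
    · rw [if_neg h]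

end Factor

/-- Frobenius mod `p` for finite sums. -/
lemma prime_dvd_sum_pow_sub {A : Type*} [CommRing A] {p : ℕ} (hp : p.Prime) {ι : Type*}
    (s : Finset ι) (x : ι → A) (k : ℕ) :
    (p : A) ∣ (∑ j ∈ s, x j) ^ p ^ k - ∑ j ∈ s, x j ^ p ^ k := by
  classical
  induction s using Finset.induction_on with
  | empty => simp [zero_pow (pow_pos hp.pos k).ne']
  | @insert b t hb ih =>
    rw [Finset.sum_insert hb, Finset.sum_insert hb]
    obtain ⟨w, hw⟩ := exists_add_pow_prime_pow_eq hp (x b) (∑ j ∈ t, x j) k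
    rw [hw]
    have hring : x b ^ p ^ k + (∑ j ∈ t, x j) ^ p ^ k + (↑p * x b * ∑ j ∈ t, x j) * w
        - (x b ^ p ^ k + ∑ j ∈ t, x j ^ p ^ k)
        = ((∑ j ∈ t, x j) ^ p ^ k - ∑ j ∈ t, x j ^ p ^ k) + ↑p * (x b * (∑ j ∈ t, x j) * w) := by ring
    rw [hring]
    exact dvd_add ih (Dvd.intro _ rfl)

/-- Lemma 5.2 of Ren–Wan–Xiao–Yu (the congruence): modulo `p`, the recurrence for the
coefficients `e_n` of `∏_j E_{c_j f}(x)_{π_j}` involves only powers of the single element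
`T̄ = ∑_j c_j π_j`:
`n e_n ≡ ∑_{i=1}^d ∑_{r≥0} i · e_{n - i p^r} · a_i^{p^r} · (∑_j c_j π_j)^{p^r}  (mod p)`. -/
theorem mvAhCoeff_recurrence_mod_p (p d ℓ : ℕ) [Fact p.Prime] (hd : 0 < d) (hpd : ¬ p ∣ d)
    (hℓ : 0 < ℓ) {R : Type*} [CommRing R] (a : ℕ → R) (had : IsUnit (a d)) (c : Fin ℓ → R)
    (u : ℕ → R) (hu0 : u 0 = 1)
    (hu : ∀ k : ℕ, 1 ≤ k →
      k • u k = ∑ r ∈ Finset.range (k + 1), if p ^ r ≤ k then u (k - p ^ r) else 0)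
    (n : ℕ) (hn : 1 ≤ n) :
    n • mvAhCoeff ℓ d u a c (n : ℤ)
      - ∑ i ∈ Finset.Icc 1 d, ∑ r ∈ Finset.range (n + 1),
          i • mvAhCoeff ℓ d u a c ((n : ℤ) - (i : ℤ) * (p : ℤ) ^ r)
            * MvPowerSeries.C (σ := Fin ℓ) (R := R) (a i ^ p ^ r)
            * (∑ j : Fin ℓ,
                MvPowerSeries.C (σ := Fin ℓ) (R := R) (c j) * MvPowerSeries.X j) ^ p ^ r
      ∈ Ideal.span {(p : MvPowerSeries (Fin ℓ) R)} := by
  classical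
  have hp : p.Prime := Fact.out
  set F : PowerSeries (MvPowerSeries (Fin ℓ) R) :=
    ∏ j : Fin ℓ, ∏ i ∈ Finset.range (d + 1), mvAhFactor ℓ u (c j * a i) i j with hF
  -- the exact recurrence, from the logarithmic-derivative identity
  have hxD : xD F = (∑ j : Fin ℓ, ∑ i ∈ Finset.range (d + 1),
      auxG p i (MvPowerSeries.C (σ := Fin ℓ) (R := R) (c j * a i) * MvPowerSeries.X j)) * F :=
    xD_prod _ _ _ fun j _ => xD_prod _ _ _ fun i _ => xD_mvAhFactor hp u hu _ i j
  have hrec := congrArg (PowerSeries.coeff (R := MvPowerSeries (Fin ℓ) R) n) hxD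
  rw [coeff_xD, Finset.sum_mul, map_sum] at hrec
  have hrec2 : (n : ℕ) • PowerSeries.coeff (R := MvPowerSeries (Fin ℓ) R) n F
      = ∑ j : Fin ℓ, ∑ i ∈ Finset.range (d + 1), ∑ r ∈ Finset.range (n + 1),
          if i * p ^ r ≤ n then
            (i : MvPowerSeries (Fin ℓ) R) *
              (MvPowerSeries.C (σ := Fin ℓ) (R := R) (c j * a i) * MvPowerSeries.X j) ^ (p ^ r) *
              PowerSeries.coeff (R := MvPowerSeries (Fin ℓ) R) (n - i * p ^ r) F
          else 0 := by
    rw [hrec]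
    refine Finset.sum_congr rfl fun j _ => ?_
    rw [Finset.sum_mul, map_sum]
    exact Finset.sum_congr rfl fun i _ => coeff_auxG_mul hp i _ F n
  -- identify `mvAhCoeff` with coefficients of `F`
  have he0 : mvAhCoeff ℓ d u a c (n : ℤ) = PowerSeries.coeff (R := MvPowerSeries (Fin ℓ) R) n F := by
    rw [mvAhCoeff, if_neg (by omega), hF]
    norm_num
  -- the exact form of the right-hand side
  have hB : (∑ i ∈ Finset.Icc 1 d, ∑ r ∈ Finset.range (n + 1),
        i • mvAhCoeff ℓ d u a c ((n : ℤ) - (i : ℤ) * (p : ℤ) ^ r)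
          * MvPowerSeries.C (σ := Fin ℓ) (R := R) (a i ^ p ^ r)
          * ∑ j : Fin ℓ, (MvPowerSeries.C (σ := Fin ℓ) (R := R) (c j) * MvPowerSeries.X j) ^ p ^ r)
      = ∑ j : Fin ℓ, ∑ i ∈ Finset.range (d + 1), ∑ r ∈ Finset.range (n + 1),
          if i * p ^ r ≤ n then
            (i : MvPowerSeries (Fin ℓ) R) *
              (MvPowerSeries.C (σ := Fin ℓ) (R := R) (c j * a i) * MvPowerSeries.X j) ^ (p ^ r) *
              PowerSeries.coeff (R := MvPowerSeries (Fin ℓ) R) (n - i * p ^ r) F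
          else 0 := by
    conv_rhs => rw [Finset.sum_comm]
    have hswap : ∀ i ∈ Finset.range (d + 1),
        (∑ j : Fin ℓ, ∑ r ∈ Finset.range (n + 1),
          if i * p ^ r ≤ n then
            (i : MvPowerSeries (Fin ℓ) R) *
              (MvPowerSeries.C (σ := Fin ℓ) (R := R) (c j * a i) * MvPowerSeries.X j) ^ (p ^ r) *
              PowerSeries.coeff (R := MvPowerSeries (Fin ℓ) R) (n - i * p ^ r) F
          else 0)
        = ∑ r ∈ Finset.range (n + 1),
            i • mvAhCoeff ℓ d u a c ((n : ℤ) - (i : ℤ) * (p : ℤ) ^ r)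
              * MvPowerSeries.C (σ := Fin ℓ) (R := R) (a i ^ p ^ r)
              * ∑ j : Fin ℓ, (MvPowerSeries.C (σ := Fin ℓ) (R := R) (c j) * MvPowerSeries.X j) ^ p ^ r := by
      intro i _
      rw [Finset.sum_comm]
      refine Finset.sum_congr rfl fun r _ => ?_
      set m := i * p ^ r with hm
      have hcast : (i : ℤ) * (p : ℤ) ^ r = (m : ℤ) := by rw [hm]; push_cast; ring
      by_cases h : m ≤ n
      · have hco : mvAhCoeff ℓ d u a c ((n : ℤ) - (i : ℤ) * (p : ℤ) ^ r)
            = PowerSeries.coeff (R := MvPowerSeries (Fin ℓ) R) (n - m) F := by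
          have htn : ((n : ℤ) - (m : ℤ)).toNat = n - m := by omega
          rw [hcast, mvAhCoeff, if_neg (by omega), htn, hF]
        rw [hco, Finset.mul_sum]
        refine Finset.sum_congr rfl fun j _ => ?_
        rw [if_pos h]
        have hYpow : (MvPowerSeries.C (σ := Fin ℓ) (R := R) (c j * a i) * MvPowerSeries.X j) ^ (p ^ r)
            = (MvPowerSeries.C (σ := Fin ℓ) (R := R) (c j) * MvPowerSeries.X j) ^ (p ^ r)
              * MvPowerSeries.C (σ := Fin ℓ) (R := R) (a i ^ p ^ r) := by
          rw [map_mul, map_pow]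
          ring
        rw [hYpow, nsmul_eq_mul]
        ring
      · have hco : mvAhCoeff ℓ d u a c ((n : ℤ) - (i : ℤ) * (p : ℤ) ^ r) = 0 := by
          rw [hcast, mvAhCoeff, if_pos (by omega)]
        rw [hco, smul_zero, zero_mul, zero_mul]
        exact Finset.sum_eq_zero fun j _ => if_neg h
    rw [Finset.sum_congr rfl hswap]
    refine Finset.sum_subset ?_ ?_
    · intro i hi
      rw [Finset.mem_Icc] at hi
      rw [Finset.mem_range]
      omega
    · intro i hi hni
      rw [Finset.mem_range] at hi
      rw [Finset.mem_Icc] at hni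
      have : i = 0 := by omega
      subst this
      refine Finset.sum_eq_zero fun r _ => ?_
      simp
  -- put the exact identity together
  have hexact : n • mvAhCoeff ℓ d u a c (n : ℤ)
      = ∑ i ∈ Finset.Icc 1 d, ∑ r ∈ Finset.range (n + 1),
          i • mvAhCoeff ℓ d u a c ((n : ℤ) - (i : ℤ) * (p : ℤ) ^ r)
            * MvPowerSeries.C (σ := Fin ℓ) (R := R) (a i ^ p ^ r)
            * ∑ j : Fin ℓ, (MvPowerSeries.C (σ := Fin ℓ) (R := R) (c j) * MvPowerSeries.X j) ^ p ^ r := by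
    rw [he0, hB, hrec2]
  rw [hexact, ← Finset.sum_sub_distrib]
  refine Ideal.sum_mem _ fun i _ => ?_
  rw [← Finset.sum_sub_distrib]
  refine Ideal.sum_mem _ fun r _ => ?_
  rw [← mul_sub]
  refine Ideal.mem_span_singleton.mpr (Dvd.dvd.mul_left ?_ _)
  rw [← dvd_neg, neg_sub]
  exact prime_dvd_sum_pow_sub hp Finset.univ
    (fun j => MvPowerSeries.C (σ := Fin ℓ) (R := R) (c j) * MvPowerSeries.X j) r
end

section
/- Let R be a commutative ring, I ⊆ R an ideal, and M_0, ..., M_{a-1} be k×k matrices (truncations of twisted I-adically incremental matrices): assume the (m,n)-entry of each M_j lies in I^{⌈(pm-n)/d⌉}. Then the coefficient r_k of s^k in det(1 - s·M_{a-1}⋯M_1M_0) satisfies r_k ∈ I^{⌈ak(k-1)(p-1)/(2d)⌉}. -/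
open Polynomial Matrix Finset

/-- The coefficient of `X^k` in `det (1 - X • N)` for a `k × k` matrix `N` is
`(-1)^k * det N`. -/
lemma coeff_det_one_sub_X_smul {R : Type*} [CommRing R] {k : ℕ}
    (N : Matrix (Fin k) (Fin k) R) :
    ((1 - (X : R[X]) • N.map C).det).coeff k = (-1) ^ k * N.det := by
  rw [Matrix.det_apply', Polynomial.finset_sum_coeff]
  have hentry : ∀ (σ : Equiv.Perm (Fin k)) (i : Fin k),
      (1 - (X : R[X]) • N.map C) (σ i) i
        = C ((1 : Matrix (Fin k) (Fin k) R) (σ i) i) - X * C (N (σ i) i) := by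
    intro σ i
    simp [Matrix.sub_apply, Matrix.smul_apply, Matrix.one_apply, Matrix.map_apply,
      smul_eq_mul, apply_ite (C : R → R[X])]
  have key : ∀ σ : Equiv.Perm (Fin k),
      (∏ i, (1 - (X : R[X]) • N.map C) (σ i) i).coeff k
        = (-1) ^ k * ∏ i, N (σ i) i := by
    intro σ
    have hdeg : ∀ i ∈ (Finset.univ : Finset (Fin k)),
        ((1 - (X : R[X]) • N.map C) (σ i) i).natDegree ≤ 1 := by
      intro i _
      rw [hentry]
      refine (natDegree_sub_le _ _).trans (max_le ?_ ?_)
      · simp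
      · exact natDegree_mul_le.trans (by simp [natDegree_X_le])
    have h := Polynomial.coeff_prod_of_natDegree_le (s := (Finset.univ : Finset (Fin k)))
      (fun i => (1 - (X : R[X]) • N.map C) (σ i) i) 1 hdeg
    rw [show (Finset.univ : Finset (Fin k)).card * 1 = k by simp] at h
    rw [h]
    have hc : ∀ i : Fin k, ((1 - (X : R[X]) • N.map C) (σ i) i).coeff 1 = -1 * N (σ i) i := by
      intro i
      rw [hentry]
      simp [coeff_C]
    rw [Finset.prod_congr rfl fun i _ => hc i, Finset.prod_mul_distrib]
    simp
  have step : ∀ σ : Equiv.Perm (Fin k),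
      ((((Equiv.Perm.sign σ : ℤ) : R[X]) * ∏ i, (1 - (X : R[X]) • N.map C) (σ i) i)).coeff k
        = ((Equiv.Perm.sign σ : ℤ) : R) * ((-1) ^ k * ∏ i, N (σ i) i) := by
    intro σ
    rw [Polynomial.coeff_intCast_mul, key σ]
  rw [Finset.sum_congr rfl fun σ _ => step σ, Matrix.det_apply', Finset.mul_sum]
  exact Finset.sum_congr rfl fun σ _ => by ring

/-- For any permutation `σ`, the sum of the exponents `⌈(p σ(i) - i)/d⌉⁺` is at least
`⌈k(k-1)(p-1)/(2d)⌉⁺`. -/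
lemma per_sigma_ceil {k p d : ℕ} (hp : 0 < p) (hd : 0 < d) (σ : Equiv.Perm (Fin k)) :
    Int.toNat ⌈((k * (k - 1) * (p - 1) : ℕ) : ℚ) / ((2 * d : ℕ) : ℚ)⌉
      ≤ ∑ i : Fin k,
          Int.toNat ⌈((((p : ℤ) * ((σ i : Fin k) : ℕ) - ((i : Fin k) : ℕ) : ℤ)) : ℚ) / (d : ℚ)⌉ := by
  rw [Int.toNat_le]
  set q : Fin k → ℚ :=
    fun i => (((p : ℤ) * ((σ i : Fin k) : ℕ) - ((i : Fin k) : ℕ) : ℤ) : ℚ) / (d : ℚ) with hq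
  have hd' : (d : ℚ) ≠ 0 := Nat.cast_ne_zero.mpr hd.ne'
  have hσ : ∑ i : Fin k, (((σ i : Fin k) : ℕ) : ℚ) = ∑ i : Fin k, ((i : ℕ) : ℚ) :=
    Equiv.sum_comp σ (fun i => ((i : ℕ) : ℚ))
  have h2n : (∑ i : Fin k, (i : ℕ)) * 2 = k * (k - 1) := by
    rw [Fin.sum_univ_eq_sum_range (fun i => i)]
    exact Finset.sum_range_id_mul_two k
  have hQ : ((k * (k - 1) * (p - 1) : ℕ) : ℚ) / ((2 * d : ℕ) : ℚ) = ∑ i : Fin k, q i := by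
    simp only [hq]
    rw [← Finset.sum_div]
    push_cast
    rw [Finset.sum_sub_distrib, ← Finset.mul_sum, hσ, Nat.cast_sub hp, Nat.cast_one]
    have h2' : ((k : ℚ) * ((k - 1 : ℕ) : ℚ)) = (∑ i : Fin k, ((i : ℕ) : ℚ)) * 2 := by
      exact_mod_cast h2n.symm
    rw [h2']
    field_simp
  calc ⌈((k * (k - 1) * (p - 1) : ℕ) : ℚ) / ((2 * d : ℕ) : ℚ)⌉
      ≤ ∑ i : Fin k, ⌈q i⌉ := by
        rw [Int.ceil_le, hQ]
        push_cast
        exact Finset.sum_le_sum fun i _ => Int.le_ceil _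
    _ ≤ ((∑ i : Fin k, Int.toNat ⌈q i⌉ : ℕ) : ℤ) := by
        push_cast
        exact Finset.sum_le_sum fun i _ => Int.self_le_toNat _

/-- Determinant of a single twisted incremental matrix lies in `I^⌈k(k-1)(p-1)/(2d)⌉⁺`. -/
lemma det_mem_pow {R : Type*} [CommRing R] (I : Ideal R) {k p d : ℕ}
    (hp : 0 < p) (hd : 0 < d) (N : Matrix (Fin k) (Fin k) R)
    (hN : ∀ m n : Fin k,
      N m n ∈ I ^ (Int.toNat ⌈((((p : ℤ) * (m : ℕ) - (n : ℕ) : ℤ)) : ℚ) / (d : ℚ)⌉)) :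
    N.det ∈ I ^ (Int.toNat ⌈((k * (k - 1) * (p - 1) : ℕ) : ℚ) / ((2 * d : ℕ) : ℚ)⌉) := by
  rw [Matrix.det_apply]
  refine Submodule.sum_mem _ fun σ _ => ?_
  rw [Units.smul_def, zsmul_eq_mul]
  refine Ideal.mul_mem_left _ _ ?_
  refine Ideal.pow_le_pow_right (per_sigma_ceil hp hd σ) ?_
  rw [← Finset.prod_pow_eq_pow_sum]
  exact Ideal.prod_mem_prod fun i _ => hN (σ i) i

lemma ceil_mul_toNat_le (a N D : ℕ) :
    Int.toNat ⌈((a * N : ℕ) : ℚ) / ((D : ℕ) : ℚ)⌉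
      ≤ a * Int.toNat ⌈((N : ℕ) : ℚ) / ((D : ℕ) : ℚ)⌉ := by
  have hnn : (0 : ℚ) ≤ (N : ℚ) / (D : ℚ) := div_nonneg (Nat.cast_nonneg _) (Nat.cast_nonneg _)
  have hc : (0 : ℤ) ≤ ⌈((N : ℕ) : ℚ) / ((D : ℕ) : ℚ)⌉ := Int.ceil_nonneg hnn
  rw [Int.toNat_le]
  push_cast [Int.toNat_of_nonneg hc]
  rw [Int.ceil_le]
  push_cast
  rw [mul_div_assoc]
  exact mul_le_mul_of_nonneg_left (Int.le_ceil _) (Nat.cast_nonneg a)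

/-- Proposition 4.4 of Ren–Wan–Xiao–Yu (first assertion, finite-matrix setting).  Let
`M_0, …, M_{a-1}` be `k × k` matrices over `(R, I)` that are twisted `I`-adically
incremental in `d` steps: the `(m,n)`-entry of each `M_j` lies in `I^⌈(pm-n)/d⌉`
(with `I^t = R` for `t ≤ 0`).  Then the coefficient `r_k` of `s^k` in
`det(1 - s · M_{a-1} ⋯ M_1 M_0)` lies in `I^⌈ak(k-1)(p-1)/(2d)⌉`. -/
theorem charpoly_coeff_mem_pow_ideal
    {R : Type*} [CommRing R] (I : Ideal R) (p d a k : ℕ)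
    (hp : 0 < p) (hd : 0 < d) (ha : 0 < a)
    (M : Fin a → Matrix (Fin k) (Fin k) R)
    (hM : ∀ (j : Fin a) (m n : Fin k),
      M j m n ∈ I ^ (Int.toNat ⌈((((p : ℤ) * (m : ℕ) - (n : ℕ) : ℤ)) : ℚ) / (d : ℚ)⌉)) :
    (Matrix.det
        ((1 : Matrix (Fin k) (Fin k) (Polynomial R))
          - (Polynomial.X : Polynomial R) •
            ((List.ofFn fun j : Fin a =>
              (M j).map (fun x => Polynomial.C x)).reverse.prod))).coeff k
      ∈ I ^ (Int.toNat ⌈((a * k * (k - 1) * (p - 1) : ℕ) : ℚ) / ((2 * d : ℕ) : ℚ)⌉) := by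
  classical
  set P : Matrix (Fin k) (Fin k) R := (List.ofFn M).reverse.prod with hP
  have hlist : (List.ofFn fun j : Fin a =>
        (M j).map (fun x => Polynomial.C x)).reverse.prod = P.map Polynomial.C := by
    have h1 : (List.ofFn fun j : Fin a => (M j).map fun x => Polynomial.C x)
        = (List.ofFn M).map (RingHom.mapMatrix (Polynomial.C : R →+* R[X])) := by
      rw [List.map_ofFn]
      rfl
    rw [h1, ← List.map_reverse, ← map_list_prod (RingHom.mapMatrix (Polynomial.C : R →+* R[X])),
      RingHom.mapMatrix_apply]
  have hdet : P.det = ∏ j : Fin a, (M j).det := by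
    rw [hP, ← List.prod_ofFn (f := fun j => (M j).det)]
    have := map_list_prod (Matrix.detMonoidHom (n := Fin k) (R := R)) (List.ofFn M).reverse
    simp only [Matrix.coe_detMonoidHom] at this
    rw [this, List.map_reverse, List.prod_reverse, List.map_ofFn]
    rfl
  rw [hlist, coeff_det_one_sub_X_smul]
  refine Ideal.mul_mem_left _ _ ?_
  set E : ℕ := Int.toNat ⌈((k * (k - 1) * (p - 1) : ℕ) : ℚ) / ((2 * d : ℕ) : ℚ)⌉ with hE
  have harith : Int.toNat ⌈((a * k * (k - 1) * (p - 1) : ℕ) : ℚ) / ((2 * d : ℕ) : ℚ)⌉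
      ≤ a * E := by
    have h := ceil_mul_toNat_le a (k * (k - 1) * (p - 1)) (2 * d)
    rwa [show a * (k * (k - 1) * (p - 1)) = a * k * (k - 1) * (p - 1) from by ring] at h
  refine Ideal.pow_le_pow_right harith ?_
  rw [hdet]
  have h1 : ∏ j : Fin a, (M j).det ∈ ∏ j : Fin a, I ^ E :=
    Ideal.prod_mem_prod fun j _ => det_mem_pow I hp hd (M j) (hM j)
  rwa [Finset.prod_pow_eq_pow_sum, Finset.sum_const, Finset.card_univ, Fintype.card_fin,
    smul_eq_mul] at h1
end
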